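/- Let P : (ζ_R, ∞) → ℝ be a C² map with ζ_R ≤ ζ_L, P(q) > ζ_L for all q, lim_{q→ζ_R⁺} P(q) > ζ_L, and suppose at every fixed point q of P, P'(q) = G(q) where G(q) = [(q−ζ_R)(P_R(q)−ζ_L)]/[(P_R(q)−ζ_R)(q−ζ_L)] e^{2h(q)} with P_R(q) < ζ_R, P_R strictly decreasing, h strictly decreasing, and G > 0 with G strictly decreasing. Then P has at most one fixed point in (ζ_R, ∞), and if a fixed point q* exists then P'(q*) < 1 (so q* is asymptotically stable). -/

import Mathlib

open Set Filter Real

noncomputable def s17A (ζR ζL : ℝ) (PR h : ℝ → ℝ) (x : ℝ) : ℝ :=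
  (x - ζR) * (PR x - ζL) / (PR x - ζR) * Real.exp (2 * h x)

lemma stmt17_alg (n m s e dh w : ℝ) (hs : s ≠ 0) :
    ((n / s ^ 2 * e + m / s * (e * (2 * dh))) * w - m / s * e) * s ^ 2
      = e * ((n * w - m * s) + 2 * dh * (m * s) * w) := by
  field_simp
  ring

lemma stmt17_aux_deriv (ζR ζL : ℝ) (PR h : ℝ → ℝ) (q : ℝ) (hζ : ζR ≤ ζL) (hq : ζL < q)
    (hPRd : DifferentiableAt ℝ PR q) (hhd : DifferentiableAt ℝ h q)
    (hPRq : PR q < ζR) (hpr : deriv PR q < 0) (hdh0 : deriv h q < 0) :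
    ∃ a', HasDerivAt (s17A ζR ζL PR h) a' q ∧
      a' * (q - ζL) < s17A ζR ζL PR h q := by
  have hqR : ζR < q := lt_of_le_of_lt hζ hq
  have hs : PR q - ζR ≠ 0 := ne_of_lt (by linarith)
  have hu : HasDerivAt (fun x => (x - ζR) * (PR x - ζL))
      (1 * (PR q - ζL) + (q - ζR) * deriv PR q) q :=
    (((hasDerivAt_id q).sub_const ζR).mul ((hPRd.hasDerivAt).sub_const ζL))
  have hv : HasDerivAt (fun x => PR x - ζR) (deriv PR q) q := (hPRd.hasDerivAt).sub_const ζR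
  have hB := hu.div hv hs
  have hE : HasDerivAt (fun x => Real.exp (2 * h x)) (Real.exp (2 * h q) * (2 * deriv h q)) q :=
    ((hhd.hasDerivAt).const_mul 2).exp
  have hA := hB.mul hE
  refine ⟨_, hA, ?_⟩
  set p := PR q with hp
  set d := deriv PR q with hd
  set dh := deriv h q with hdh'
  set e := Real.exp (2 * h q) with he
  have hepos : 0 < e := Real.exp_pos _
  have hsneg : p - ζR < 0 := by linarith
  have hss : (0:ℝ) < (p - ζR)^2 := by positivity
  have key : ((1 * (p - ζL) + (q - ζR) * d) * (p - ζR) - (q - ζR) * (p - ζL) * d) * (q - ζL)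
      - (q - ζR) * (p - ζL) * (p - ζR) ≤ 0 := by
    have h2 : -((p - ζL) * (p - ζR)) + (q - ζR) * (q - ζL) * d < 0 := by
      nlinarith [mul_pos_of_neg_of_neg (show p - ζL < 0 by linarith) (show p - ζR < 0 by linarith),
        mul_neg_of_pos_of_neg (mul_pos (show (0:ℝ) < q - ζR by linarith)
          (show (0:ℝ) < q - ζL by linarith)) hpr]
    have h3 := mul_nonpos_of_nonneg_of_nonpos (show (0:ℝ) ≤ ζL - ζR by linarith) (le_of_lt h2)
    nlinarith [h3]
  have hterm : 2 * dh * ((q - ζR) * (p - ζL) * (p - ζR)) * (q - ζL) < 0 := by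
    have h4 : 0 < (q - ζR) * (p - ζL) * (p - ζR) := by
      apply mul_pos_of_neg_of_neg _ hsneg
      apply mul_neg_of_pos_of_neg <;> linarith
    have h5 : 2 * dh < 0 := by linarith
    nlinarith [mul_pos h4 (show (0:ℝ) < q - ζL by linarith)]
  set a' := ((1 * (p - ζL) + (q - ζR) * d) * (p - ζR) - (q - ζR) * (p - ζL) * d) / (p - ζR) ^ 2 * e
      + (q - ζR) * (p - ζL) / (p - ζR) * (e * (2 * dh)) with ha'
  have hmul : (a' * (q - ζL) - (q - ζR) * (p - ζL) / (p - ζR) * e) * (p - ζR) ^ 2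
      = e * ((((1 * (p - ζL) + (q - ζR) * d) * (p - ζR) - (q - ζR) * (p - ζL) * d) * (q - ζL)
          - (q - ζR) * (p - ζL) * (p - ζR))
        + 2 * dh * ((q - ζR) * (p - ζL) * (p - ζR)) * (q - ζL)) := by
    have := stmt17_alg ((1 * (p - ζL) + (q - ζR) * d) * (p - ζR) - (q - ζR) * (p - ζL) * d)
      ((q - ζR) * (p - ζL)) (p - ζR) e dh (q - ζL) hs
    rw [ha', this]
  have hneg : (a' * (q - ζL) - (q - ζR) * (p - ζL) / (p - ζR) * e) * (p - ζR) ^ 2 < 0 := by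
    rw [hmul]
    apply mul_neg_of_pos_of_neg hepos
    linarith
  have hfin : a' * (q - ζL) - (q - ζR) * (p - ζL) / (p - ζR) * e < 0 := by
    by_contra hge
    exact absurd hneg (not_lt.2 (mul_nonneg (not_lt.1 hge) hss.le))
  have : s17A ζR ζL PR h q = (q - ζR) * (p - ζL) / (p - ζR) * e := rfl
  rw [this]
  have h' : ((fun x => (x - ζR) * (PR x - ζL)) / fun x => PR x - ζR) q
      = (q - ζR) * (p - ζL) / (p - ζR) := rfl
  rw [h', ← ha']
  linarith

lemma stmt17_ev_left_gt {f : ℝ → ℝ} {a d : ℝ} (hf : HasDerivAt f d a) (hd : d < 0) :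
    ∀ᶠ x in nhdsWithin a (Set.Iio a), f a < f x := by
  have h1 : Filter.Tendsto (slope f a) (nhdsWithin a {a}ᶜ) (nhds d) :=
    hasDerivAt_iff_tendsto_slope.mp hf
  have h2 : ∀ᶠ x in nhdsWithin a {a}ᶜ, slope f a x < 0 := h1.eventually_lt_const hd
  have h3 := h2.filter_mono (nhdsWithin_mono a (fun x hx => ne_of_lt hx))
  filter_upwards [h3, self_mem_nhdsWithin] with x hx hxa
  rw [slope_def_field, div_neg_iff] at hx
  have hxa' : x - a < 0 := sub_neg.2 hxa
  rcases hx with ⟨h4, _⟩ | ⟨_, h5⟩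
  · linarith
  · linarith

lemma stmt17_ev_left_lt {f : ℝ → ℝ} {a d : ℝ} (hf : HasDerivAt f d a) (hd : 0 < d) :
    ∀ᶠ x in nhdsWithin a (Set.Iio a), f x < f a := by
  have h1 : Filter.Tendsto (slope f a) (nhdsWithin a {a}ᶜ) (nhds d) :=
    hasDerivAt_iff_tendsto_slope.mp hf
  have h2 : ∀ᶠ x in nhdsWithin a {a}ᶜ, 0 < slope f a x := h1.eventually_const_lt hd
  have h3 := h2.filter_mono (nhdsWithin_mono a (fun x hx => ne_of_lt hx))
  filter_upwards [h3, self_mem_nhdsWithin] with x hx hxa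
  rw [slope_def_field, div_pos_iff] at hx
  have hxa' : x - a < 0 := sub_neg.2 hxa
  rcases hx with ⟨_, h5⟩ | ⟨h4, _⟩
  · linarith
  · linarith

lemma stmt17_ev_right_lt {f : ℝ → ℝ} {a d : ℝ} (hf : HasDerivAt f d a) (hd : d < 0) :
    ∀ᶠ x in nhdsWithin a (Set.Ioi a), f x < f a := by
  have h1 : Filter.Tendsto (slope f a) (nhdsWithin a {a}ᶜ) (nhds d) :=
    hasDerivAt_iff_tendsto_slope.mp hf
  have h2 : ∀ᶠ x in nhdsWithin a {a}ᶜ, slope f a x < 0 := h1.eventually_lt_const hd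
  have h3 := h2.filter_mono (nhdsWithin_mono a (fun x hx => ne_of_gt hx))
  filter_upwards [h3, self_mem_nhdsWithin] with x hx hxa
  rw [slope_def_field, div_neg_iff] at hx
  have hxa' : 0 < x - a := sub_pos.2 hxa
  rcases hx with ⟨_, h5⟩ | ⟨h4, _⟩
  · linarith
  · linarith

/-- Steps 6–7 of the proof of Theorem 2.1: under the derivative formula for the
Poincaré map `P`, `P` has at most one fixed point, and at any fixed point `P' < 1`
(asymptotic stability). -/
theorem stmt_17 (ζR ζL : ℝ) (hζ : ζR ≤ ζL)
    (P PR h : ℝ → ℝ)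
    (hP2 : ContDiffOn ℝ 2 P (Ioi ζR))
    (hPRdiff : ∀ q ∈ Ioi ζR, DifferentiableAt ℝ PR q)
    (hhdiff : ∀ q ∈ Ioi ζR, DifferentiableAt ℝ h q)
    (hPgt : ∀ q ∈ Ioi ζR, P q > ζL)
    (hlim : ∃ Lval : ℝ, Lval > ζL ∧ Tendsto P (nhdsWithin ζR (Ioi ζR)) (nhds Lval))
    (hPRlt : ∀ q ∈ Ioi ζR, PR q < ζR)
    (hPR' : ∀ q ∈ Ioi ζR, deriv PR q < 0)
    (hh' : ∀ q ∈ Ioi ζR, deriv h q < 0)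
    (hderiv : ∀ q ∈ Ioi ζR,
      deriv P q = (q - ζR) * (PR q - ζL) / ((PR q - ζR) * (P q - ζL)) *
        Real.exp (2 * h q)) :
    (∀ q₁ ∈ Ioi ζR, ∀ q₂ ∈ Ioi ζR, P q₁ = q₁ → P q₂ = q₂ → q₁ = q₂) ∧
    (∀ q ∈ Ioi ζR, P q = q → deriv P q < 1) := by
  set A := s17A ζR ζL PR h with hA
  set G : ℝ → ℝ := fun x => A x / (x - ζL) with hG
  set Hf : ℝ → ℝ := fun x => P x - x with hHf
  have hPdiff : ∀ q ∈ Ioi ζR, DifferentiableAt ℝ P q := fun q hq =>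
    (hP2.differentiableOn (by norm_num)).differentiableAt (isOpen_Ioi.mem_nhds hq)
  have hHcont : ContinuousOn Hf (Ioi ζR) :=
    (hP2.continuousOn).sub continuousOn_id
  have hHd : ∀ q ∈ Ioi ζR, HasDerivAt Hf (deriv P q - 1) q := fun q hq =>
    ((hPdiff q hq).hasDerivAt).sub (hasDerivAt_id q)
  have hfixL : ∀ q ∈ Ioi ζR, P q = q → ζL < q := by
    intro q hq hfx
    have := hPgt q hq
    rw [hfx] at this
    exact this
  have hDP : ∀ q ∈ Ioi ζR, deriv P q = A q / (P q - ζL) := by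
    intro q hq
    have h1 : PR q - ζR ≠ 0 := ne_of_lt (by have := hPRlt q hq; linarith)
    have h2 : P q - ζL ≠ 0 := ne_of_gt (by have := hPgt q hq; linarith)
    rw [hderiv q hq, hA]
    show _ = (q - ζR) * (PR q - ζL) / (PR q - ζR) * Real.exp (2 * h q) / (P q - ζL)
    field_simp
  have hGd : ∀ q ∈ Ioi ζL, ∃ g', HasDerivAt G g' q ∧ g' < 0 := by
    intro q hq
    have hqL : ζL < q := hq
    have hqR : q ∈ Ioi ζR := lt_of_le_of_lt hζ hqL
    obtain ⟨a', hA', hlt⟩ := stmt17_aux_deriv ζR ζL PR h q hζ hqL (hPRdiff q hqR)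
      (hhdiff q hqR) (hPRlt q hqR) (hPR' q hqR) (hh' q hqR)
    have hden : HasDerivAt (fun x => x - ζL) 1 q := (hasDerivAt_id q).sub_const ζL
    have hGq := hA'.div hden (sub_ne_zero.2 (ne_of_gt hqL))
    refine ⟨_, hGq, ?_⟩
    apply div_neg_of_neg_of_pos
    · have : A q * 1 = A q := mul_one _
      rw [this]
      linarith
    · exact pow_pos (by linarith) 2
  have hGanti : StrictAntiOn G (Ioi ζL) := by
    apply strictAntiOn_of_deriv_neg (convex_Ioi ζL)
    · intro x hx
      obtain ⟨g', hg', _⟩ := hGd x hx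
      exact hg'.differentiableAt.continuousAt.continuousWithinAt
    · intro x hx
      rw [interior_Ioi] at hx
      obtain ⟨g', hg', hneg⟩ := hGd x hx
      rwa [hg'.deriv]
  have hfixG : ∀ q ∈ Ioi ζR, P q = q → deriv P q = G q := by
    intro q hq hfx
    rw [hDP q hq, hG]
    show A q / (P q - ζL) = A q / (q - ζL)
    rw [hfx]
  obtain ⟨L, hL, hten⟩ := hlim
  have hHten : Tendsto Hf (nhdsWithin ζR (Ioi ζR)) (nhds (L - ζR)) :=
    hten.sub (tendsto_id.mono_left nhdsWithin_le_nhds)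
  have hev : ∀ᶠ x in nhdsWithin ζR (Ioi ζR), 0 < Hf x :=
    hHten.eventually_const_lt (by linarith)
  obtain ⟨b, hbR, hb⟩ := mem_nhdsGT_iff_exists_Ioc_subset.mp hev
  have hbR' : ζR < b := hbR
  have hIcb : Ici b ⊆ Ioi ζR := fun x hx => lt_of_lt_of_le hbR' hx
  have hSclosed : IsClosed {x | b ≤ x ∧ Hf x = 0} := by
    have heq : {x | b ≤ x ∧ Hf x = 0} = Ici b ∩ Hf ⁻¹' {0} := by
      ext x; simp [mem_Ici]
    rw [heq]
    exact (hHcont.mono hIcb).preimage_isClosed_of_isClosed isClosed_Ici isClosed_singleton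
  have hfix_mem : ∀ q ∈ Ioi ζR, P q = q → b ≤ q ∧ Hf q = 0 := by
    intro q hq hfx
    have hH0 : Hf q = 0 := by rw [hHf]; simp [hfx]
    constructor
    · by_contra hlt
      push_neg at hlt
      have h5 : 0 < Hf q := hb ⟨hq, le_of_lt hlt⟩
      rw [hH0] at h5
      exact lt_irrefl 0 h5
    · exact hH0
  -- key : existence of minimal fixed point with all the properties
  have key : ∀ q₀ ∈ Ioi ζR, P q₀ = q₀ → ∃ qs, ζR < qs ∧ P qs = qs ∧ qs ≤ q₀ ∧
      deriv P qs < 1 ∧ ∀ x, ζR < x → x < qs → 0 < Hf x := by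
    intro q₀ hq₀ hfx₀
    set S := {x | b ≤ x ∧ Hf x = 0} with hS
    have hq₀S : q₀ ∈ S := hfix_mem q₀ hq₀ hfx₀
    have hne : S.Nonempty := ⟨q₀, hq₀S⟩
    have hbdd : BddBelow S := ⟨b, fun x hx => hx.1⟩
    set qs := sInf S with hqs
    have hqsS : qs ∈ S := hSclosed.csInf_mem hne hbdd
    have hqsR : ζR < qs := lt_of_lt_of_le hbR' hqsS.1
    have hqsfix : P qs = qs := by
      have := hqsS.2
      rw [hHf] at this
      simpa [sub_eq_zero] using this
    have hHqs : Hf qs = 0 := hqsS.2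
    have hqsle : qs ≤ q₀ := csInf_le hbdd hq₀S
    have hmin : ∀ x, ζR < x → Hf x = 0 → qs ≤ x := by
      intro x hx hfx
      have hPfx : P x = x := by rw [hHf] at hfx; simpa [sub_eq_zero] using hfx
      exact csInf_le hbdd (hfix_mem x hx hPfx)
    have hpos : ∀ x, ζR < x → x < qs → 0 < Hf x := by
      intro x hxR hxq
      by_contra hle
      push_neg at hle
      rcases eq_or_lt_of_le hle with heq | hlt
      · exact absurd (hmin x hxR heq) (not_le.2 hxq)
      · rcases le_or_gt x b with hxb | hbx
        · have h5 : 0 < Hf x := hb ⟨hxR, hxb⟩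
          linarith
        · have hHb : 0 < Hf b := hb ⟨hbR', le_refl b⟩
          have hcont : ContinuousOn Hf (Icc b x) :=
            hHcont.mono (fun y hy => lt_of_lt_of_le hbR' hy.1)
          have h0mem : (0:ℝ) ∈ Icc (Hf x) (Hf b) := ⟨le_of_lt hlt, le_of_lt hHb⟩
          obtain ⟨z, hz, hz0⟩ := intermediate_value_Icc' (le_of_lt hbx) hcont h0mem
          have hzR : ζR < z := lt_of_lt_of_le hbR' hz.1
          have := hmin z hzR hz0
          have : qs ≤ x := le_trans this hz.2
          linarith
    have hqsL : ζL < qs := hfixL qs hqsR hqsfix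
    have hstab : deriv P qs < 1 := by
      by_contra hge
      push_neg at hge
      rcases eq_or_lt_of_le hge with heq | hlt
      · -- deriv P qs = 1 : second derivative argument
        obtain ⟨a', hA', hltA⟩ := stmt17_aux_deriv ζR ζL PR h qs hζ hqsL (hPRdiff qs hqsR)
          (hhdiff qs hqsR) (hPRlt qs hqsR) (hPR' qs hqsR) (hh' qs hqsR)
        have hPd : HasDerivAt P (deriv P qs) qs := (hPdiff qs hqsR).hasDerivAt
        have hden : HasDerivAt (fun x => P x - ζL) (deriv P qs) qs := hPd.sub_const ζL
        have hPql : P qs - ζL ≠ 0 := ne_of_gt (by rw [hqsfix]; linarith)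
        have hD := hA'.div hden hPql
        have hddneg : (a' * (P qs - ζL) - A qs * deriv P qs) / (P qs - ζL) ^ 2 < 0 := by
          rw [hqsfix, ← heq]
          apply div_neg_of_neg_of_pos
          · rw [mul_one]; linarith
          · exact pow_pos (by linarith) 2
        have hevEq : deriv P =ᶠ[nhds qs] (fun x => A x / (P x - ζL)) := by
          filter_upwards [isOpen_Ioi.mem_nhds hqsR] with x hx
          exact hDP x hx
        have hD' : HasDerivAt (deriv P)
            ((a' * (P qs - ζL) - A qs * deriv P qs) / (P qs - ζL) ^ 2) qs :=
          hD.congr_of_eventuallyEq hevEq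
        have hev3 : ∀ᶠ x in nhdsWithin qs (Iio qs), deriv P qs < deriv P x :=
          stmt17_ev_left_gt hD' hddneg
        obtain ⟨l, hl, hlsub⟩ := mem_nhdsLT_iff_exists_Ioo_subset.mp hev3
        have hlq : l < qs := hl
        set l' := max l ζR with hl'
        have hl'q : l' < qs := max_lt hlq hqsR
        set x := (l' + qs) / 2 with hx
        have hx1 : l' < x := by rw [hx]; linarith
        have hx2 : x < qs := by rw [hx]; linarith
        have hxR : ζR < x := lt_of_le_of_lt (le_max_right l ζR) hx1
        have hIccsub : Icc x qs ⊆ Ioi ζR := fun y hy => lt_of_lt_of_le hxR hy.1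
        obtain ⟨c, hc, hceq⟩ := exists_hasDerivAt_eq_slope Hf (fun y => deriv P y - 1) hx2
          (hHcont.mono hIccsub)
          (fun y hy => hHd y (lt_trans hxR hy.1))
        have hcIoo : c ∈ Ioo l qs :=
          ⟨lt_trans (lt_of_le_of_lt (le_max_left l ζR) hx1) hc.1, hc.2⟩
        have h6 : deriv P qs < deriv P c := hlsub hcIoo
        have h7 : 0 < Hf x := hpos x hxR hx2
        rw [hHqs] at hceq
        have h8 : deriv P c - 1 < 0 := by
          rw [hceq]
          apply div_neg_of_neg_of_pos
          · linarith
          · linarith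
        linarith
      · -- 1 < deriv P qs
        have hH' : HasDerivAt Hf (deriv P qs - 1) qs := hHd qs hqsR
        have hev2 := stmt17_ev_left_lt hH' (by linarith)
        have hIoo : Ioo ζR qs ∈ nhdsWithin qs (Iio qs) :=
          Ioo_mem_nhdsLT_of_mem ⟨hqsR, le_refl qs⟩
        have hIoo' : ∀ᶠ x in nhdsWithin qs (Iio qs), x ∈ Ioo ζR qs := hIoo
        obtain ⟨x, hx1, hx2⟩ := (hev2.and hIoo').exists
        have := hpos x hx2.1 hx2.2
        rw [hHqs] at hx1
        linarith
    exact ⟨qs, hqsR, hqsfix, hqsle, hstab, hpos⟩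
  -- uniqueness core
  have uniq : ∀ a c, a ∈ Ioi ζR → c ∈ Ioi ζR → P a = a → P c = c → a < c → False := by
    intro a c haR hcR hfa hfc hac
    obtain ⟨qs, hqsR, hqsfix, hqsle, hstab, hpos⟩ := key a haR hfa
    have hHqs : Hf qs = 0 := by rw [hHf]; simp [hqsfix]
    have hH' : HasDerivAt Hf (deriv P qs - 1) qs := hHd qs hqsR
    have hev4 := stmt17_ev_right_lt hH' (by linarith)
    have hqsc : qs < c := lt_of_le_of_lt hqsle hac
    have hIoo : Ioo qs c ∈ nhdsWithin qs (Ioi qs) :=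
      Ioo_mem_nhdsGT_of_mem ⟨le_refl qs, hqsc⟩
    have hIoo' : ∀ᶠ x in nhdsWithin qs (Ioi qs), x ∈ Ioo qs c := hIoo
    obtain ⟨y, hy1, hy2⟩ := (hev4.and hIoo').exists
    rw [hHqs] at hy1
    have hyR : ζR < y := lt_trans hqsR hy2.1
    have hIccyc : Icc y c ⊆ Ioi ζR := fun x hx => lt_of_lt_of_le hyR hx.1
    set Z := {x | x ∈ Icc y c ∧ Hf x = 0} with hZ
    have hZclosed : IsClosed Z := by
      have heq : Z = Icc y c ∩ Hf ⁻¹' {0} := by ext x; simp [hZ]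
      rw [heq]
      exact (hHcont.mono hIccyc).preimage_isClosed_of_isClosed isClosed_Icc isClosed_singleton
    have hcZ : c ∈ Z := ⟨⟨le_of_lt hy2.2, le_refl c⟩, by rw [hHf]; simp [hfc]⟩
    have hZne : Z.Nonempty := ⟨c, hcZ⟩
    have hZbdd : BddBelow Z := ⟨y, fun x hx => hx.1.1⟩
    set c' := sInf Z with hc'
    have hc'Z : c' ∈ Z := hZclosed.csInf_mem hZne hZbdd
    have hyc' : y < c' := by
      rcases eq_or_lt_of_le hc'Z.1.1 with heq | hlt
      · rw [heq] at hy1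
        rw [hc'Z.2] at hy1
        linarith
      · exact hlt
    have hc'R : ζR < c' := lt_trans hyR hyc'
    have hfixc' : P c' = c' := by
      have := hc'Z.2
      rw [hHf] at this
      simpa [sub_eq_zero] using this
    have hneg2 : ∀ x, y ≤ x → x < c' → Hf x < 0 := by
      intro x hx1 hx2
      by_contra hge
      push_neg at hge
      rcases eq_or_lt_of_le hge with heq | hlt
      · have hxZ : x ∈ Z := ⟨⟨hx1, le_trans (le_of_lt hx2) hc'Z.1.2⟩, heq.symm⟩
        exact absurd (csInf_le hZbdd hxZ) (not_le.2 hx2)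
      · have hcont : ContinuousOn Hf (Icc y x) :=
          hHcont.mono (fun z hz => lt_of_lt_of_le hyR hz.1)
        have h0mem : (0:ℝ) ∈ Icc (Hf y) (Hf x) := ⟨le_of_lt hy1, le_of_lt hlt⟩
        obtain ⟨z, hz, hz0⟩ := intermediate_value_Icc hx1 hcont h0mem
        have hzZ : z ∈ Z := ⟨⟨hz.1, le_trans hz.2 (le_trans (le_of_lt hx2) hc'Z.1.2)⟩, hz0⟩
        have := csInf_le hZbdd hzZ
        have : c' ≤ x := le_trans this hz.2
        linarith
    have hH'c : HasDerivAt Hf (deriv P c' - 1) c' := hHd c' hc'R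
    have hslope := hasDerivAt_iff_tendsto_slope.mp hH'c
    have h8 : ∀ᶠ x in nhdsWithin c' (Iio c'), 0 ≤ slope Hf c' x := by
      have hIco : Ico y c' ∈ nhdsWithin c' (Iio c') :=
        Ico_mem_nhdsLT_of_mem ⟨hyc', le_refl c'⟩
      have hIco' : ∀ᶠ x in nhdsWithin c' (Iio c'), x ∈ Ico y c' := hIco
      filter_upwards [hIco', self_mem_nhdsWithin] with x hx hx2
      rw [slope_def_field]
      have hHx : Hf x < 0 := hneg2 x hx.1 hx.2
      have hHc' : Hf c' = 0 := hc'Z.2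
      have h1 : Hf x - Hf c' ≤ 0 := by rw [hHc']; linarith
      have h2 : x - c' ≤ 0 := le_of_lt (sub_neg.2 hx2)
      have := div_nonneg (neg_nonneg.2 h1) (neg_nonneg.2 h2)
      rwa [neg_div_neg_eq] at this
    have hmono : nhdsWithin c' (Iio c') ≤ nhdsWithin c' {c'}ᶜ :=
      nhdsWithin_mono _ (fun x hx => ne_of_lt hx)
    haveI : (nhdsWithin c' (Iio c')).NeBot := nhdsLT_neBot c'
    have h9 : 0 ≤ deriv P c' - 1 :=
      ge_of_tendsto (hslope.mono_left hmono) h8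
    have hqsL : ζL < qs := hfixL qs hqsR hqsfix
    have hc'L : ζL < c' := hfixL c' hc'R hfixc'
    have hqsc' : qs < c' := lt_trans hy2.1 hyc'
    have hGlt := hGanti hqsL hc'L hqsc'
    rw [← hfixG qs hqsR hqsfix, ← hfixG c' hc'R hfixc'] at hGlt
    linarith
  constructor
  · intro q₁ h₁ q₂ h₂ hf₁ hf₂
    by_contra hne
    rcases lt_or_gt_of_ne hne with hlt | hgt
    · exact uniq q₁ q₂ h₁ h₂ hf₁ hf₂ hlt
    · exact uniq q₂ q₁ h₂ h₁ hf₂ hf₁ hgt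
  · intro q hq hfx
    obtain ⟨qs, hqsR, hqsfix, hqsle, hstab, _⟩ := key q hq hfx
    rcases eq_or_lt_of_le hqsle with heq | hlt
    · rwa [← heq]
    · exact absurd (uniq qs q hqsR hq hqsfix hfx hlt) (fun hf => hf)
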